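/- Let m > 0, B(p) = bp² with b ∈ ℝ∖{0}, W± as above, and S := (W⁺)*W⁻. Then (Sf)(q,p) = f(q,p) − (f(q,p) − f(−q,−p))/(1 − 2i|p|/(mB(p))) for a.e. (q,p), and S W⁺ f = W⁻ f for all f ∈ L²(ℝ²). -/

import Mathlib

open MeasureTheory

/-- Heaviside step function: `1` for positive arguments, `0` otherwise. -/
noncomputable def heaviside (x : ℝ) : ℝ := if 0 < x then 1 else 0

/-- The classical wave operator `W^ε` (`ε = 1` for `W⁺`, `ε = -1` for `W⁻`), for `B(p) = b p²`. -/
noncomputable def Wcl (m b ε : ℝ) (f : ℝ × ℝ → ℂ) : ℝ × ℝ → ℂ :=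
  fun z =>
    f z - (((heaviside (-ε * (z.1 * z.2)) : ℝ) : ℂ)
        / (1 + (ε : ℂ) * (2 * Complex.I * ((|z.2| : ℝ) : ℂ)) / ((m : ℂ) * (b : ℂ) * (z.2 : ℂ) ^ 2)))
      * (f z - f (-z.1, -z.2))

/-- The adjoint `(W^ε)*` of the classical wave operator. -/
noncomputable def WclStar (m b ε : ℝ) (f : ℝ × ℝ → ℂ) : ℝ × ℝ → ℂ :=
  fun z =>
    f z - (((heaviside (-ε * (z.1 * z.2)) : ℝ) : ℂ)
        / (1 - (ε : ℂ) * (2 * Complex.I * ((|z.2| : ℝ) : ℂ)) / ((m : ℂ) * (b : ℂ) * (z.2 : ℂ) ^ 2)))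
      * (f z - f (-z.1, -z.2))

/-- The classical scattering operator `S := (W⁺)* W⁻`. -/
noncomputable def Scl (m b : ℝ) (f : ℝ × ℝ → ℂ) : ℝ × ℝ → ℂ :=
  WclStar m b 1 (Wcl m b (-1) f)

lemma hw_ne (a c : ℝ) :
    (1 + 2 * Complex.I * (a : ℂ) / (c : ℂ)) ≠ 0 ∧
    (1 - 2 * Complex.I * (a : ℂ) / (c : ℂ)) ≠ 0 := by
  have hre : (2 * Complex.I * (a : ℂ) / (c : ℂ)).re = 0 := by
    have h : 2 * Complex.I * (a : ℂ) / (c : ℂ) = Complex.I * (((2 * a / c : ℝ)) : ℂ) := by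
      push_cast; ring
    rw [h]; simp
  refine ⟨fun h => ?_, fun h => ?_⟩ <;>
  · have := congrArg Complex.re h
    simp [hre] at this

lemma key1 (m b : ℝ) (f : ℝ × ℝ → ℂ) (q p : ℝ) (hz : q * p ≠ 0) :
    Scl m b f (q, p) = f (q, p) - (f (q, p) - f (-q, -p))
      / (1 - (2 * Complex.I * ((|p| : ℝ) : ℂ)) / ((m : ℂ) * (b : ℂ) * (p : ℂ) ^ 2)) := by
  rcases lt_or_gt_of_ne hz with hqp | hqp
  · have h1 : ¬ (0 < q * p) := not_lt.2 hqp.le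
    have h2 : (0 : ℝ) < -(q * p) := by linarith
    simp only [Scl, WclStar, Wcl, heaviside]
    norm_num [h1, h2]
    rw [inv_mul_eq_div]
  · have h1 : ¬ (0 < -(q * p)) := by push_neg; linarith
    simp only [Scl, WclStar, Wcl, heaviside]
    norm_num [h1, hqp]
    rw [inv_mul_eq_div]
    congr 1
    ring

lemma key2 (m b : ℝ) (f : ℝ × ℝ → ℂ) (q p : ℝ) :
    Scl m b (Wcl m b 1 f) (q, p) = Wcl m b (-1) f (q, p) := by
  rcases lt_trichotomy (q * p) 0 with hqp | hqp | hqp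
  · have h1 : ¬ (0 < q * p) := not_lt.2 hqp.le
    have h2 : (0 : ℝ) < -(q * p) := by linarith
    have hw1 := (hw_ne (|p|) (m * b * p ^ 2)).1
    have hw2 := (hw_ne (|p|) (m * b * p ^ 2)).2
    have e1 : ((m * b * p ^ 2 : ℝ) : ℂ) = (m : ℂ) * (b : ℂ) * (p : ℂ) ^ 2 := by push_cast; ring
    rw [e1] at hw1 hw2
    simp only [Scl, WclStar, Wcl, heaviside]
    norm_num [h1, h2]
    field_simp
    ring
  · simp only [Scl, WclStar, Wcl, heaviside]
    norm_num [hqp]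
  · have h1 : ¬ (0 < -(q * p)) := by push_neg; linarith
    simp only [Scl, WclStar, Wcl, heaviside]
    norm_num [h1, hqp]

lemma null_axes : volume {z : ℝ × ℝ | z.1 * z.2 = 0} = 0 := by
  have hsub : {z : ℝ × ℝ | z.1 * z.2 = 0} ⊆
      (({0} : Set ℝ) ×ˢ (Set.univ : Set ℝ)) ∪ ((Set.univ : Set ℝ) ×ˢ ({0} : Set ℝ)) := by
    rintro ⟨q, p⟩ h
    rcases mul_eq_zero.1 h with h | h <;> simp_all <;> tauto
  refine measure_mono_null hsub ?_
  rw [Measure.volume_eq_prod]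
  refine le_antisymm (le_trans (measure_union_le _ _) ?_) zero_le
  rw [Measure.prod_prod, Measure.prod_prod]
  simp

theorem stmt14 (m b : ℝ) (hm : 0 < m) (hb : b ≠ 0) :
    (∀ f : ℝ × ℝ → ℂ,
      Scl m b f =ᵐ[volume] fun z : ℝ × ℝ =>
        f z - (f z - f (-z.1, -z.2))
          / (1 - (2 * Complex.I * ((|z.2| : ℝ) : ℂ)) / ((m : ℂ) * (b : ℂ) * (z.2 : ℂ) ^ 2))) ∧
    (∀ f : ℝ × ℝ → ℂ, ∀ z : ℝ × ℝ, Scl m b (Wcl m b 1 f) z = Wcl m b (-1) f z) := by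
  constructor
  · intro f
    have hmem : {z : ℝ × ℝ | z.1 * z.2 ≠ 0} ∈ ae (volume : Measure (ℝ × ℝ)) := by
      rw [mem_ae_iff]
      have : {z : ℝ × ℝ | z.1 * z.2 ≠ 0}ᶜ = {z : ℝ × ℝ | z.1 * z.2 = 0} := by
        ext z; simp [mul_eq_zero]; tauto
      rw [this]
      exact null_axes
    refine Filter.eventuallyEq_of_mem hmem ?_
    rintro ⟨q, p⟩ hz
    exact key1 m b f q p hz
  · intro f ⟨q, p⟩
    exact key2 m b f q p
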